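/- Suppose (E,Dom(E)) is dominated by an F-expectation (Ẽ,Dom(Ẽ)) satisfying (H0)–(H5), and let {X(τ,σ):τ,σ∈S_0} be a biadmissible family with sup_{τ,σ∈S_0} E[X(τ,σ)] < ∞. Define U_1(τ,σ) = esssup_{τ1∈S_τ} E_τ[X(τ1,σ)]. Then for all stopping times τ, σ_1, σ_2 ∈ S_0: |E[U_1(τ,σ_1)] − E[U_1(τ,σ_2)]| ≤ sup_{S∈S_0} Ẽ[|X(S,σ_1) − X(S,σ_2)|]. -/

import Mathlib

open MeasureTheory Filter Set

noncomputable section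

namespace OptMultStop

variable {Ω : Type*}

/-- A real function is right-continuous with left limits (RCLL) on `[0, T]`. -/
def RCLLOn (f : ℝ → ℝ) (T : ℝ) : Prop :=
  (∀ t ∈ Set.Ico (0 : ℝ) T, ContinuousWithinAt f (Set.Ici t) t) ∧
    ∀ t ∈ Set.Ioc (0 : ℝ) T, ∃ l : ℝ, Filter.Tendsto f (nhdsWithin t (Set.Iio t)) (nhds l)

/-- A real function is right-continuous on `[0, T)`. -/
def RCOn (f : ℝ → ℝ) (T : ℝ) : Prop :=
  ∀ t ∈ Set.Ico (0 : ℝ) T, ContinuousWithinAt f (Set.Ici t) t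

/-- `τ` is a stopping time for `ℱ` taking values in `[s ·, T]`; for `s = S` a stopping
time this encodes membership in `S_S`. -/
def IsStopIn [m : MeasurableSpace Ω] (ℱ : Filtration ℝ m) (T : ℝ) (s τ : Ω → ℝ) : Prop :=
  IsStoppingTime ℱ (fun ω => (τ ω : WithTop ℝ)) ∧ (∀ ω, s ω ≤ τ ω) ∧ ∀ ω, τ ω ≤ T

/-- Membership in `S_0`: a stopping time with values in `[0, T]`. -/
def Stop0 [m : MeasurableSpace Ω] (ℱ : Filtration ℝ m) (T : ℝ) (τ : Ω → ℝ) : Prop :=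
  IsStopIn ℱ T (fun _ => (0 : ℝ)) τ

/-- `g` is an essential supremum of the family of random variables `s`. -/
def IsEssSupFam [MeasurableSpace Ω] (μ : Measure Ω) (s : Set (Ω → ℝ)) (g : Ω → ℝ) : Prop :=
  (∀ f ∈ s, f ≤ᵐ[μ] g) ∧ ∀ h : Ω → ℝ, (∀ f ∈ s, f ≤ᵐ[μ] h) → g ≤ᵐ[μ] h

/-- `g` is an essential infimum of the family of random variables `s`. -/
def IsEssInfFam [MeasurableSpace Ω] (μ : Measure Ω) (s : Set (Ω → ℝ)) (g : Ω → ℝ) : Prop :=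
  (∀ f ∈ s, g ≤ᵐ[μ] f) ∧ ∀ h : Ω → ℝ, (∀ f ∈ s, h ≤ᵐ[μ] f) → h ≤ᵐ[μ] g

/-- An `𝔽`-consistent nonlinear expectation `(E, Dom(E))` on the horizon `[0, T]`,
together with its conditional versions at stopping times, satisfying the domain
axioms (D1)-(D3), (A1)-(A4) at stopping times, and hypotheses (H0)-(H5). -/
structure FExp [m : MeasurableSpace Ω] (μ : Measure Ω) (T : ℝ) (ℱ : Filtration ℝ m) where
  /-- the domain `Dom(E)` -/
  Dom : Set (Ω → ℝ)
  /-- `cond τ ξ` is the conditional expectation `E_τ[ξ]` at the stopping time `τ` -/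
  cond : (Ω → ℝ) → (Ω → ℝ) → Ω → ℝ
  /-- `E0 ξ` is the (deterministic) value `E[ξ] = E_0[ξ]` -/
  E0 : (Ω → ℝ) → ℝ
  zero_mem : (fun _ => (0 : ℝ)) ∈ Dom
  one_mem : (fun _ => (1 : ℝ)) ∈ Dom
  /-- (H4): all constants belong to the domain -/
  const_mem : ∀ c : ℝ, (fun _ => c) ∈ Dom
  add_mem : ∀ {ξ η : Ω → ℝ}, ξ ∈ Dom → η ∈ Dom → ξ + η ∈ Dom
  indicator_mem : ∀ {ξ : Ω → ℝ}, ξ ∈ Dom → ∀ {A : Set Ω}, MeasurableSet A →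
    A.indicator ξ ∈ Dom
  sandwich_mem : ∀ {ξ η : Ω → ℝ}, η ∈ Dom → (∀ᵐ ω ∂μ, 0 ≤ ξ ω ∧ ξ ω ≤ η ω) → ξ ∈ Dom
  cond_mem : ∀ {τ ξ : Ω → ℝ}, Stop0 ℱ T τ → ξ ∈ Dom → 0 ≤ᵐ[μ] ξ → cond τ ξ ∈ Dom
  cond_nonneg : ∀ {τ ξ : Ω → ℝ}, Stop0 ℱ T τ → ξ ∈ Dom → 0 ≤ᵐ[μ] ξ → 0 ≤ᵐ[μ] cond τ ξ
  /-- `E_τ[ξ]` is `F_τ`-measurable -/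
  cond_adapted : ∀ {τ ξ : Ω → ℝ} (hτ : Stop0 ℱ T τ), ξ ∈ Dom → 0 ≤ᵐ[μ] ξ →
    Measurable[hτ.1.measurableSpace] (cond τ ξ)
  /-- monotonicity -/
  mono : ∀ {τ ξ η : Ω → ℝ}, Stop0 ℱ T τ → ξ ∈ Dom → 0 ≤ᵐ[μ] ξ → η ∈ Dom → 0 ≤ᵐ[μ] η →
    ξ ≤ᵐ[μ] η → cond τ ξ ≤ᵐ[μ] cond τ η
  /-- strict monotonicity -/
  strict_mono : ∀ {τ ξ η : Ω → ℝ}, Stop0 ℱ T τ → ξ ∈ Dom → 0 ≤ᵐ[μ] ξ → η ∈ Dom →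
    0 ≤ᵐ[μ] η → ξ ≤ᵐ[μ] η → cond τ ξ =ᵐ[μ] cond τ η → ξ =ᵐ[μ] η
  /-- time consistency -/
  time_consistent : ∀ {σ τ ξ : Ω → ℝ}, Stop0 ℱ T σ → Stop0 ℱ T τ → (∀ ω, σ ω ≤ τ ω) →
    ξ ∈ Dom → 0 ≤ᵐ[μ] ξ → cond σ (cond τ ξ) =ᵐ[μ] cond σ ξ
  /-- zero-one law -/
  zero_one : ∀ {τ ξ : Ω → ℝ} (hτ : Stop0 ℱ T τ), ξ ∈ Dom → 0 ≤ᵐ[μ] ξ →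
    ∀ {A : Set Ω}, MeasurableSet[hτ.1.measurableSpace] A →
    cond τ (A.indicator ξ) =ᵐ[μ] A.indicator (cond τ ξ)
  /-- translation invariance -/
  translation : ∀ {τ ξ η : Ω → ℝ} (hτ : Stop0 ℱ T τ), ξ ∈ Dom → 0 ≤ᵐ[μ] ξ → η ∈ Dom →
    0 ≤ᵐ[μ] η → Measurable[hτ.1.measurableSpace] η → cond τ (ξ + η) =ᵐ[μ] cond τ ξ + η
  /-- `F_0` is trivial: `E_0[ξ]` is the constant `E0 ξ` -/
  E0_eq : ∀ {ξ : Ω → ℝ}, ξ ∈ Dom → 0 ≤ᵐ[μ] ξ →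
    cond (fun _ => (0 : ℝ)) ξ =ᵐ[μ] fun _ => E0 ξ
  /-- the process `t ↦ E_t[ξ]` has RCLL paths -/
  rcll_paths : ∀ {ξ : Ω → ℝ}, ξ ∈ Dom → 0 ≤ᵐ[μ] ξ →
    ∀ᵐ ω ∂μ, RCLLOn (fun t => cond (fun _ => t) ξ ω) T
  /-- (H0) -/
  h0 : ∀ {A : Set Ω}, MeasurableSet A → 0 < μ A →
    Tendsto (fun n : ℕ => E0 (A.indicator fun _ => (n : ℝ))) atTop atTop
  /-- (H1) -/
  h1 : ∀ {ξ : Ω → ℝ}, ξ ∈ Dom → 0 ≤ᵐ[μ] ξ → ∀ {A : ℕ → Set Ω},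
    (∀ n, MeasurableSet (A n)) → Monotone A → (∀ᵐ ω ∂μ, ω ∈ ⋃ n, A n) →
    Tendsto (fun n => E0 ((A n).indicator ξ)) atTop (nhds (E0 ξ))
  /-- (H2) -/
  h2 : ∀ {ξ η : Ω → ℝ}, ξ ∈ Dom → 0 ≤ᵐ[μ] ξ → η ∈ Dom → 0 ≤ᵐ[μ] η →
    ∀ {A : ℕ → Set Ω}, (∀ n, MeasurableSet (A n)) → Antitone A →
    (∀ᵐ ω ∂μ, ω ∉ ⋂ n, A n) →
    Tendsto (fun n => E0 (ξ + (A n).indicator η)) atTop (nhds (E0 ξ))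
  /-- (H5) -/
  h5 : ∀ {ξ : ℕ → Ω → ℝ} {ζ : Ω → ℝ}, (∀ n, ξ n ∈ Dom) → (∀ n, 0 ≤ᵐ[μ] ξ n) →
    (∀ᵐ ω ∂μ, Tendsto (fun n => ξ n ω) atTop (nhds (ζ ω))) →
    (∃ C : ℝ, ∃ᶠ n in atTop, E0 (ξ n) ≤ C) → ζ ∈ Dom

variable [m : MeasurableSpace Ω] {μ : Measure Ω} {T : ℝ} {ℱ : Filtration ℝ m}

/-- (H6): sub-additivity. -/
def FExp.Subadditive (𝔈 : FExp μ T ℱ) : Prop :=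
  ∀ ⦃τ ξ η : Ω → ℝ⦄, Stop0 ℱ T τ → ξ ∈ 𝔈.Dom → 0 ≤ᵐ[μ] ξ → η ∈ 𝔈.Dom → 0 ≤ᵐ[μ] η →
    𝔈.cond τ (ξ + η) ≤ᵐ[μ] 𝔈.cond τ ξ + 𝔈.cond τ η

/-- (H7): positive homogeneity. -/
def FExp.PosHom (𝔈 : FExp μ T ℱ) : Prop :=
  ∀ ⦃τ ξ : Ω → ℝ⦄ (l : ℝ), 0 ≤ l → Stop0 ℱ T τ → ξ ∈ 𝔈.Dom → 0 ≤ᵐ[μ] ξ →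
    𝔈.cond τ (fun ω => l * ξ ω) =ᵐ[μ] fun ω => l * 𝔈.cond τ ξ ω

/-- Admissible family of rewards indexed by stopping times. -/
def Admissible (𝔈 : FExp μ T ℱ) (X : (Ω → ℝ) → Ω → ℝ) : Prop :=
  (∀ τ : Ω → ℝ, ∀ hτ : Stop0 ℱ T τ, X τ ∈ 𝔈.Dom ∧ 0 ≤ᵐ[μ] X τ ∧
      Measurable[hτ.1.measurableSpace] (X τ)) ∧
    ∀ τ σ : Ω → ℝ, Stop0 ℱ T τ → Stop0 ℱ T σ →
      ∀ᵐ ω ∂μ, τ ω = σ ω → X τ ω = X σ ω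

/-- `sup_{τ ∈ S_0} E[X(τ)] < ∞`. -/
def BddRewardE0 (𝔈 : FExp μ T ℱ) (X : (Ω → ℝ) → Ω → ℝ) : Prop :=
  ∃ C : ℝ, ∀ τ : Ω → ℝ, Stop0 ℱ T τ → 𝔈.E0 (X τ) ≤ C

/-- `v` is the value function family of the single stopping problem for the reward `X`:
`v(S) = esssup_{τ ∈ S_S} E_S[X(τ)]`. -/
def IsValueFam (𝔈 : FExp μ T ℱ) (X v : (Ω → ℝ) → Ω → ℝ) : Prop :=
  ∀ S : Ω → ℝ, Stop0 ℱ T S →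
    IsEssSupFam μ {g | ∃ τ : Ω → ℝ, IsStopIn ℱ T S τ ∧ g = 𝔈.cond S (X τ)} (v S)

/-- An `E`-supermartingale system. -/
def SupermartSys (𝔈 : FExp μ T ℱ) (h : (Ω → ℝ) → Ω → ℝ) : Prop :=
  (∀ τ : Ω → ℝ, ∀ hτ : Stop0 ℱ T τ, h τ ∈ 𝔈.Dom ∧ 0 ≤ᵐ[μ] h τ ∧
      Measurable[hτ.1.measurableSpace] (h τ)) ∧
    ∀ τ σ : Ω → ℝ, Stop0 ℱ T τ → Stop0 ℱ T σ → (∀ᵐ ω ∂μ, τ ω ≤ σ ω) →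
      𝔈.cond τ (h σ) ≤ᵐ[μ] h τ

/-- Right-continuity along stopping times in `E`-expectation (RCE). -/
def RCE (𝔈 : FExp μ T ℱ) (X : (Ω → ℝ) → Ω → ℝ) : Prop :=
  ∀ τ : Ω → ℝ, Stop0 ℱ T τ → ∀ τs : ℕ → Ω → ℝ, (∀ n, Stop0 ℱ T (τs n)) →
    (∀ᵐ ω ∂μ, Antitone (fun n => τs n ω) ∧
      Tendsto (fun n => τs n ω) atTop (nhds (τ ω))) →
    Tendsto (fun n => 𝔈.E0 (X (τs n))) atTop (nhds (𝔈.E0 (X τ)))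

/-- Left-continuity along stopping times in `E`-expectation (LCE). -/
def LCE (𝔈 : FExp μ T ℱ) (X : (Ω → ℝ) → Ω → ℝ) : Prop :=
  ∀ τ : Ω → ℝ, Stop0 ℱ T τ → ∀ τs : ℕ → Ω → ℝ, (∀ n, Stop0 ℱ T (τs n)) →
    (∀ᵐ ω ∂μ, Monotone (fun n => τs n ω) ∧
      Tendsto (fun n => τs n ω) atTop (nhds (τ ω))) →
    Tendsto (fun n => 𝔈.E0 (X (τs n))) atTop (nhds (𝔈.E0 (X τ)))

/-- Continuity along stopping times in `E`-expectation (CE). -/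
def CE (𝔈 : FExp μ T ℱ) (X : (Ω → ℝ) → Ω → ℝ) : Prop :=
  RCE 𝔈 X ∧ LCE 𝔈 X

/-- Right-continuity along stopping times (RC): a.s. pointwise convergence. -/
def RCfam (𝔈 : FExp μ T ℱ) (X : (Ω → ℝ) → Ω → ℝ) : Prop :=
  ∀ τ : Ω → ℝ, Stop0 ℱ T τ → ∀ τs : ℕ → Ω → ℝ, (∀ n, Stop0 ℱ T (τs n)) →
    (∀ᵐ ω ∂μ, Antitone (fun n => τs n ω) ∧
      Tendsto (fun n => τs n ω) atTop (nhds (τ ω))) →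
    ∀ᵐ ω ∂μ, Tendsto (fun n => X (τs n) ω) atTop (nhds (X τ ω))

/-- Biadmissible family of rewards indexed by pairs of stopping times. -/
def Biadmissible (𝔈 : FExp μ T ℱ) (X : (Ω → ℝ) → (Ω → ℝ) → Ω → ℝ) : Prop :=
  (∀ τ σ : Ω → ℝ, ∀ hτ : Stop0 ℱ T τ, ∀ hσ : Stop0 ℱ T σ,
      X τ σ ∈ 𝔈.Dom ∧ 0 ≤ᵐ[μ] X τ σ ∧
      Measurable[(hτ.1.max hσ.1).measurableSpace] (X τ σ)) ∧
    ∀ τ σ τ' σ' : Ω → ℝ, Stop0 ℱ T τ → Stop0 ℱ T σ → Stop0 ℱ T τ' → Stop0 ℱ T σ' →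
      ∀ᵐ ω ∂μ, τ ω = τ' ω → σ ω = σ' ω → X τ σ ω = X τ' σ' ω

/-- `sup_{τ,σ ∈ S_0} E[X(τ,σ)] < ∞`. -/
def BddReward2E0 (𝔈 : FExp μ T ℱ) (X : (Ω → ℝ) → (Ω → ℝ) → Ω → ℝ) : Prop :=
  ∃ C : ℝ, ∀ τ σ : Ω → ℝ, Stop0 ℱ T τ → Stop0 ℱ T σ → 𝔈.E0 (X τ σ) ≤ C

/-- `v` is the value function family of the double stopping problem:
`v(S) = esssup_{τ₁,τ₂ ∈ S_S} E_S[X(τ₁,τ₂)]`. -/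
def IsValueFam2 (𝔈 : FExp μ T ℱ) (X : (Ω → ℝ) → (Ω → ℝ) → Ω → ℝ)
    (v : (Ω → ℝ) → Ω → ℝ) : Prop :=
  ∀ S : Ω → ℝ, Stop0 ℱ T S →
    IsEssSupFam μ
      {g | ∃ τ₁ τ₂ : Ω → ℝ, IsStopIn ℱ T S τ₁ ∧ IsStopIn ℱ T S τ₂ ∧
        g = 𝔈.cond S (X τ₁ τ₂)} (v S)

/-- `u₁(θ) = esssup_{τ₁ ∈ S_θ} E_θ[X(τ₁, θ)]`. -/
def IsU1 (𝔈 : FExp μ T ℱ) (X : (Ω → ℝ) → (Ω → ℝ) → Ω → ℝ) (u₁ : (Ω → ℝ) → Ω → ℝ) : Prop :=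
  ∀ θ : Ω → ℝ, Stop0 ℱ T θ →
    IsEssSupFam μ {g | ∃ τ : Ω → ℝ, IsStopIn ℱ T θ τ ∧ g = 𝔈.cond θ (X τ θ)} (u₁ θ)

/-- `u₂(θ) = esssup_{τ₂ ∈ S_θ} E_θ[X(θ, τ₂)]`. -/
def IsU2 (𝔈 : FExp μ T ℱ) (X : (Ω → ℝ) → (Ω → ℝ) → Ω → ℝ) (u₂ : (Ω → ℝ) → Ω → ℝ) : Prop :=
  ∀ θ : Ω → ℝ, Stop0 ℱ T θ →
    IsEssSupFam μ {g | ∃ τ : Ω → ℝ, IsStopIn ℱ T θ τ ∧ g = 𝔈.cond θ (X θ τ)} (u₂ θ)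

/-- Uniform right-continuity of a biadmissible family along stopping times in
`ℰ`-expectation (URCℰ). -/
def URCE2 (ℰ : FExp μ T ℱ) (X : (Ω → ℝ) → (Ω → ℝ) → Ω → ℝ) : Prop :=
  ∀ σ : Ω → ℝ, Stop0 ℱ T σ → ∀ σs : ℕ → Ω → ℝ, (∀ n, Stop0 ℱ T (σs n)) →
    (∀ᵐ ω ∂μ, Antitone (fun n => σs n ω) ∧
      Tendsto (fun n => σs n ω) atTop (nhds (σ ω))) →
    ∀ ε : ℝ, 0 < ε → ∃ N : ℕ, ∀ n ≥ N, ∀ τ : Ω → ℝ, Stop0 ℱ T τ →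
      ℰ.E0 (fun ω => |X τ σ ω - X τ (σs n) ω|) ≤ ε ∧
      ℰ.E0 (fun ω => |X σ τ ω - X (σs n) τ ω|) ≤ ε

/-- Uniform left-continuity of a biadmissible family along stopping times in
`ℰ`-expectation (ULCℰ). -/
def ULCE2 (ℰ : FExp μ T ℱ) (X : (Ω → ℝ) → (Ω → ℝ) → Ω → ℝ) : Prop :=
  ∀ σ : Ω → ℝ, Stop0 ℱ T σ → ∀ σs : ℕ → Ω → ℝ, (∀ n, Stop0 ℱ T (σs n)) →
    (∀ᵐ ω ∂μ, Monotone (fun n => σs n ω) ∧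
      Tendsto (fun n => σs n ω) atTop (nhds (σ ω))) →
    ∀ ε : ℝ, 0 < ε → ∃ N : ℕ, ∀ n ≥ N, ∀ τ : Ω → ℝ, Stop0 ℱ T τ →
      ℰ.E0 (fun ω => |X τ σ ω - X τ (σs n) ω|) ≤ ε ∧
      ℰ.E0 (fun ω => |X σ τ ω - X (σs n) τ ω|) ≤ ε

/-- Uniform continuity (UCℰ) of a biadmissible family. -/
def UCE2 (ℰ : FExp μ T ℱ) (X : (Ω → ℝ) → (Ω → ℝ) → Ω → ℝ) : Prop :=
  URCE2 ℰ X ∧ ULCE2 ℰ X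

/-- `(E, Dom(E))` is dominated by `(Ẽ, Dom(Ẽ))`. -/
def Dominated (𝔈 𝔉 : FExp μ T ℱ) : Prop :=
  𝔈.Dom ⊆ 𝔉.Dom ∧
    ∀ τ : Ω → ℝ, Stop0 ℱ T τ → ∀ ξ η : Ω → ℝ, ξ ∈ 𝔈.Dom → η ∈ 𝔈.Dom →
      ∀ᵐ ω ∂μ, 𝔈.cond τ (ξ + η) ω - 𝔈.cond τ η ω ≤ 𝔉.cond τ ξ ω

/-- The filtration contains all `μ`-null sets (part of the usual conditions). -/
def CompleteFiltration (μ : Measure Ω) (ℱ : Filtration ℝ m) : Prop :=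
  ∀ s : Set Ω, μ s = 0 → ∀ t : ℝ, MeasurableSet[ℱ t] s

/-- The filtration is right-continuous (part of the usual conditions). -/
def RightContinuousFiltration (ℱ : Filtration ℝ m) : Prop :=
  ∀ t : ℝ, (ℱ t : MeasurableSpace Ω) = ⨅ u ∈ Set.Ioi t, ℱ u

/-- A `d`-tuple of stopping times, all in `S_s`. -/
def StopVec (ℱ : Filtration ℝ m) (T : ℝ) (s : Ω → ℝ) {d : ℕ} (τ : Fin d → Ω → ℝ) : Prop :=
  ∀ i, IsStopIn ℱ T s (τ i)

/-- A `d`-admissible family of rewards. -/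
def DAdmissible (𝔈 : FExp μ T ℱ) {d : ℕ} (X : (Fin d → Ω → ℝ) → Ω → ℝ) : Prop :=
  (∀ τ : Fin d → Ω → ℝ, StopVec ℱ T (fun _ => (0 : ℝ)) τ →
      X τ ∈ 𝔈.Dom ∧ 0 ≤ᵐ[μ] X τ ∧
      ∀ h : IsStoppingTime ℱ fun ω => (((⨆ i, τ i ω : ℝ)) : WithTop ℝ),
        Measurable[h.measurableSpace] (X τ)) ∧
    ∀ τ σ : Fin d → Ω → ℝ, StopVec ℱ T (fun _ => (0 : ℝ)) τ →
      StopVec ℱ T (fun _ => (0 : ℝ)) σ →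
      ∀ᵐ ω ∂μ, (∀ i, τ i ω = σ i ω) → X τ ω = X σ ω

/-- `sup_{τ ∈ S_0^d} E[X(τ)] < ∞`. -/
def BddRewardDE0 (𝔈 : FExp μ T ℱ) {d : ℕ} (X : (Fin d → Ω → ℝ) → Ω → ℝ) : Prop :=
  ∃ C : ℝ, ∀ τ : Fin d → Ω → ℝ, StopVec ℱ T (fun _ => (0 : ℝ)) τ → 𝔈.E0 (X τ) ≤ C

/-- `v` is the value function family of the `d`-stopping problem:
`v(S) = esssup_{τ ∈ S_S^d} E_S[X(τ)]`. -/
def IsValueFamD (𝔈 : FExp μ T ℱ) {d : ℕ} (X : (Fin d → Ω → ℝ) → Ω → ℝ)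
    (v : (Ω → ℝ) → Ω → ℝ) : Prop :=
  ∀ S : Ω → ℝ, Stop0 ℱ T S →
    IsEssSupFam μ
      {g | ∃ τ : Fin d → Ω → ℝ, StopVec ℱ T S τ ∧ g = 𝔈.cond S (X τ)} (v S)

/-- `u^{(i)}(θ) = esssup_{τ ∈ S_θ^{d-1}} E_θ[X^{(i)}(τ, θ)]`, where `X^{(i)}(τ, θ)`
inserts `θ` in the `i`-th slot. -/
def IsUi (𝔈 : FExp μ T ℱ) {d : ℕ} (X : (Fin (d + 1) → Ω → ℝ) → Ω → ℝ)
    (ui : Fin (d + 1) → (Ω → ℝ) → Ω → ℝ) : Prop :=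
  ∀ i : Fin (d + 1), ∀ θ : Ω → ℝ, Stop0 ℱ T θ →
    IsEssSupFam μ
      {g | ∃ τ : Fin d → Ω → ℝ, StopVec ℱ T θ τ ∧ g = 𝔈.cond θ (X (i.insertNth θ τ))}
      (ui i θ)

/-- Uniform continuity (UCE) of a `d`-admissible family along monotone sequences of
stopping times. -/
def UCED (𝔈 : FExp μ T ℱ) {d : ℕ} (X : (Fin (d + 1) → Ω → ℝ) → Ω → ℝ) : Prop :=
  ∀ i : Fin (d + 1), ∀ S : Ω → ℝ, Stop0 ℱ T S → ∀ Ss : ℕ → Ω → ℝ,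
    (∀ n, Stop0 ℱ T (Ss n)) →
    ((∀ᵐ ω ∂μ, Monotone fun n => Ss n ω) ∨ (∀ᵐ ω ∂μ, Antitone fun n => Ss n ω)) →
    (∀ᵐ ω ∂μ, Tendsto (fun n => Ss n ω) atTop (nhds (S ω))) →
    ∀ ε : ℝ, 0 < ε → ∃ N : ℕ, ∀ n ≥ N, ∀ θ : Fin d → Ω → ℝ,
      StopVec ℱ T (fun _ => (0 : ℝ)) θ →
      𝔈.E0 (fun ω => |X (i.insertNth (Ss n) θ) ω - X (i.insertNth S θ) ω|) ≤ ε



section AuxProof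

open Real

variable [IsProbabilityMeasure μ]

private lemma stop0_zero (hT : 0 < T) : Stop0 ℱ T (fun _ => (0 : ℝ)) :=
  ⟨isStoppingTime_const ℱ 0, fun _ => le_rfl, fun _ => hT.le⟩

private lemma stopIn_stop0 {τ ρ : Ω → ℝ} (hτ : Stop0 ℱ T τ) (h : IsStopIn ℱ T τ ρ) :
    Stop0 ℱ T ρ :=
  ⟨h.1, fun ω => le_trans (hτ.2.1 ω) (h.2.1 ω), h.2.2⟩

private lemma ae_neBot' : (ae μ).NeBot := by
  rw [MeasureTheory.ae_neBot]
  intro h0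
  have h1 : μ Set.univ = 1 := measure_univ
  rw [h0] at h1
  simp at h1

private lemma const_le_of_ae {a b : ℝ} (h : (fun _ : Ω => a) ≤ᵐ[μ] fun _ => b) : a ≤ b := by
  haveI := ae_neBot' (μ := μ)
  obtain ⟨ω, hω⟩ := h.exists
  exact hω

private lemma const_eq_of_ae {a b : ℝ} (h : (fun _ : Ω => a) =ᵐ[μ] fun _ => b) : a = b := by
  haveI := ae_neBot' (μ := μ)
  obtain ⟨ω, hω⟩ := h.exists
  exact hω

private lemma indicator_nonneg_ae {ξ : Ω → ℝ} (h : 0 ≤ᵐ[μ] ξ) (A : Set Ω) :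
    0 ≤ᵐ[μ] A.indicator ξ :=
  h.mono fun ω hω => Set.indicator_apply_nonneg fun _ => hω

private lemma FExp.E0_mono' (𝔈 : FExp μ T ℱ) (hT : 0 < T) {ξ η : Ω → ℝ}
    (hξ : ξ ∈ 𝔈.Dom) (hξ0 : 0 ≤ᵐ[μ] ξ) (hη : η ∈ 𝔈.Dom) (hη0 : 0 ≤ᵐ[μ] η)
    (h : ξ ≤ᵐ[μ] η) : 𝔈.E0 ξ ≤ 𝔈.E0 η := by
  have h1 := 𝔈.mono (stop0_zero hT) hξ hξ0 hη hη0 h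
  have h2 := 𝔈.E0_eq hξ hξ0
  have h3 := 𝔈.E0_eq hη hη0
  exact const_le_of_ae (((h2.symm.le.trans h1).trans h3.le))

private lemma FExp.E0_congr' (𝔈 : FExp μ T ℱ) (hT : 0 < T) {ξ η : Ω → ℝ}
    (hξ : ξ ∈ 𝔈.Dom) (hξ0 : 0 ≤ᵐ[μ] ξ) (hη : η ∈ 𝔈.Dom) (hη0 : 0 ≤ᵐ[μ] η)
    (h : ξ =ᵐ[μ] η) : 𝔈.E0 ξ = 𝔈.E0 η :=
  le_antisymm (𝔈.E0_mono' hT hξ hξ0 hη hη0 h.le)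
    (𝔈.E0_mono' hT hη hη0 hξ hξ0 h.symm.le)

private lemma FExp.E0_nonneg' (𝔈 : FExp μ T ℱ) (hT : 0 < T) {ξ : Ω → ℝ}
    (hξ : ξ ∈ 𝔈.Dom) (hξ0 : 0 ≤ᵐ[μ] ξ) : 0 ≤ 𝔈.E0 ξ := by
  have h1 := 𝔈.cond_nonneg (stop0_zero hT) hξ hξ0
  have h2 := 𝔈.E0_eq hξ hξ0
  exact const_le_of_ae (h1.trans h2.le)

private lemma FExp.cond_congr' (𝔈 : FExp μ T ℱ) {τ ξ η : Ω → ℝ} (hτ : Stop0 ℱ T τ)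
    (hξ : ξ ∈ 𝔈.Dom) (hξ0 : 0 ≤ᵐ[μ] ξ) (hη : η ∈ 𝔈.Dom) (hη0 : 0 ≤ᵐ[μ] η)
    (h : ξ =ᵐ[μ] η) : 𝔈.cond τ ξ =ᵐ[μ] 𝔈.cond τ η :=
  (𝔈.mono hτ hξ hξ0 hη hη0 h.le).antisymm (𝔈.mono hτ hη hη0 hξ hξ0 h.symm.le)

private lemma FExp.E0_zero' (𝔈 : FExp μ T ℱ) (hT : 0 < T) :
    𝔈.E0 (fun _ => (0 : ℝ)) = 0 := by
  have hz : (fun _ : Ω => (0 : ℝ)) ∈ 𝔈.Dom := 𝔈.zero_mem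
  have hz0 : 0 ≤ᵐ[μ] fun _ : Ω => (0 : ℝ) := ae_of_all _ fun _ => le_rfl
  have hA : MeasurableSet[(stop0_zero (ℱ := ℱ) hT).1.measurableSpace] (∅ : Set Ω) :=
    @MeasurableSet.empty Ω (stop0_zero (ℱ := ℱ) hT).1.measurableSpace
  have h01 := 𝔈.zero_one (stop0_zero hT) hz hz0 hA
  have hind : (∅ : Set Ω).indicator (fun _ => (0 : ℝ)) = fun _ => (0 : ℝ) := by
    funext ω; simp
  rw [hind] at h01
  have h2 := 𝔈.E0_eq hz hz0
  refine const_eq_of_ae ((h2.symm.trans h01).trans ?_)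
  filter_upwards with ω
  simp

private lemma FExp.E0_add_const' (𝔈 : FExp μ T ℱ) (hT : 0 < T) {ξ : Ω → ℝ} {c : ℝ}
    (hξ : ξ ∈ 𝔈.Dom) (hξ0 : 0 ≤ᵐ[μ] ξ) (hc : 0 ≤ c) :
    𝔈.E0 (ξ + fun _ => c) = 𝔈.E0 ξ + c := by
  have hcd : (fun _ : Ω => c) ∈ 𝔈.Dom := 𝔈.const_mem c
  have hc0 : 0 ≤ᵐ[μ] fun _ : Ω => c := ae_of_all _ fun _ => hc
  have htr := 𝔈.translation (stop0_zero hT) hξ hξ0 hcd hc0 measurable_const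
  have hsum : ξ + (fun _ : Ω => c) ∈ 𝔈.Dom := 𝔈.add_mem hξ hcd
  have hsum0 : 0 ≤ᵐ[μ] ξ + fun _ : Ω => c :=
    hξ0.mono fun ω hω => add_nonneg hω hc
  have h2 := 𝔈.E0_eq hsum hsum0
  have h3 := 𝔈.E0_eq hξ hξ0
  refine const_eq_of_ae ((h2.symm.trans htr).trans ?_)
  filter_upwards [h3] with ω hω
  simp only [Pi.add_apply] at *
  rw [hω]

private lemma FExp.E0_cond' (𝔈 : FExp μ T ℱ) (hT : 0 < T) {τ ξ : Ω → ℝ}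
    (hτ : Stop0 ℱ T τ) (hξ : ξ ∈ 𝔈.Dom) (hξ0 : 0 ≤ᵐ[μ] ξ) :
    𝔈.E0 (𝔈.cond τ ξ) = 𝔈.E0 ξ := by
  have htc := 𝔈.time_consistent (stop0_zero hT) hτ (fun ω => hτ.2.1 ω) hξ hξ0
  have hcd := 𝔈.cond_mem hτ hξ hξ0
  have hc0 := 𝔈.cond_nonneg hτ hξ hξ0
  have h2 := 𝔈.E0_eq hcd hc0
  have h3 := 𝔈.E0_eq hξ hξ0
  exact const_eq_of_ae ((h2.symm.trans htc).trans h3)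

private lemma E0_dominated (hT : 0 < T) (𝔈 𝔉 : FExp μ T ℱ) (hdom : Dominated 𝔈 𝔉)
    {ξ η : Ω → ℝ} (hξ : ξ ∈ 𝔈.Dom) (hξ0 : 0 ≤ᵐ[μ] ξ) (hη : η ∈ 𝔈.Dom)
    (hη0 : 0 ≤ᵐ[μ] η) : 𝔈.E0 (ξ + η) ≤ 𝔈.E0 η + 𝔉.E0 ξ := by
  have hbase := hdom.2 (fun _ => (0 : ℝ)) (stop0_zero hT) ξ η hξ hη
  have hsum : ξ + η ∈ 𝔈.Dom := 𝔈.add_mem hξ hη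
  have hsum0 : 0 ≤ᵐ[μ] ξ + η := by
    filter_upwards [hξ0, hη0] with ω h1 h2
    exact add_nonneg h1 h2
  have h1 := 𝔈.E0_eq hsum hsum0
  have h2 := 𝔈.E0_eq hη hη0
  have h3 := 𝔉.E0_eq (hdom.1 hξ) hξ0
  haveI := ae_neBot' (μ := μ)
  have : ∀ᵐ ω ∂μ, 𝔈.E0 (ξ + η) - 𝔈.E0 η ≤ 𝔉.E0 ξ := by
    filter_upwards [hbase, h1, h2, h3] with ω hb e1 e2 e3
    rw [← e1, ← e2, ← e3]
    exact hb
  obtain ⟨ω, hω⟩ := this.exists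
  linarith

private lemma directed_fam (𝔈 : FExp μ T ℱ)
    (X : (Ω → ℝ) → (Ω → ℝ) → Ω → ℝ) (hX : Biadmissible 𝔈 X)
    {τ σ ρ ρ' : Ω → ℝ} (hτ : Stop0 ℱ T τ) (hσ : Stop0 ℱ T σ)
    (hρ : IsStopIn ℱ T τ ρ) (hρ' : IsStopIn ℱ T τ ρ') :
    ∃ ρ'' : Ω → ℝ, IsStopIn ℱ T τ ρ'' ∧
      𝔈.cond τ (X ρ σ) ≤ᵐ[μ] 𝔈.cond τ (X ρ'' σ) ∧
      𝔈.cond τ (X ρ' σ) ≤ᵐ[μ] 𝔈.cond τ (X ρ'' σ) := by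
  classical
  have hρ0 : Stop0 ℱ T ρ := stopIn_stop0 hτ hρ
  have hρ'0 : Stop0 ℱ T ρ' := stopIn_stop0 hτ hρ'
  obtain ⟨hXd, hXn, -⟩ := hX.1 ρ σ hρ0 hσ
  obtain ⟨hXd', hXn', -⟩ := hX.1 ρ' σ hρ'0 hσ
  set f : Ω → ℝ := 𝔈.cond τ (X ρ σ) with hf
  set f' : Ω → ℝ := 𝔈.cond τ (X ρ' σ) with hf'
  have hmf : Measurable[hτ.1.measurableSpace] f := 𝔈.cond_adapted hτ hXd hXn
  have hmf' : Measurable[hτ.1.measurableSpace] f' := 𝔈.cond_adapted hτ hXd' hXn'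
  set A : Set Ω := {ω | f' ω ≤ f ω} with hA_def
  have hA : MeasurableSet[hτ.1.measurableSpace] A := measurableSet_le hmf' hmf
  have hAc : MeasurableSet[hτ.1.measurableSpace] Aᶜ := hA.compl
  have hAm : MeasurableSet A := hτ.1.measurableSpace_le A hA
  have hAcm : MeasurableSet Aᶜ := hAm.compl
  set ρ'' : Ω → ℝ := fun ω => if ω ∈ A then ρ ω else ρ' ω with hρ''_def
  have hst : IsStoppingTime ℱ (fun ω => (ρ'' ω : WithTop ℝ)) := by
    intro i
    have hco : ∀ f : Ω → ℝ, {ω | ((f ω : ℝ) : WithTop ℝ) ≤ ((i : ℝ) : WithTop ℝ)} =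
        {ω | f ω ≤ i} := fun f => by ext; simp
    show MeasurableSet[ℱ i] {ω | ((ρ'' ω : ℝ) : WithTop ℝ) ≤ ((i : ℝ) : WithTop ℝ)}
    rw [hco]
    have heq : {ω | ρ'' ω ≤ i} =
        (A ∩ {ω | τ ω ≤ i} ∩ {ω | ρ ω ≤ i}) ∪ (Aᶜ ∩ {ω | τ ω ≤ i} ∩ {ω | ρ' ω ≤ i}) := by
      ext ω
      by_cases h : ω ∈ A
      · have hval : ρ'' ω = ρ ω := by rw [hρ''_def]; exact if_pos h
        simp only [Set.mem_setOf_eq, Set.mem_union, Set.mem_inter_iff, Set.mem_compl_iff, hval]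
        constructor
        · intro hle
          exact Or.inl ⟨⟨h, le_trans (hρ.2.1 ω) hle⟩, hle⟩
        · rintro (⟨⟨-, -⟩, hle⟩ | ⟨⟨hc, -⟩, -⟩)
          · exact hle
          · exact absurd h hc
      · have hval : ρ'' ω = ρ' ω := by rw [hρ''_def]; exact if_neg h
        simp only [Set.mem_setOf_eq, Set.mem_union, Set.mem_inter_iff, Set.mem_compl_iff, hval]
        constructor
        · intro hle
          exact Or.inr ⟨⟨h, le_trans (hρ'.2.1 ω) hle⟩, hle⟩
        · rintro (⟨⟨hc, -⟩, -⟩ | ⟨⟨-, -⟩, hle⟩)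
          · exact absurd hc h
          · exact hle
    rw [heq]
    have e1 : MeasurableSet[ℱ i] (A ∩ {ω | ((τ ω : ℝ) : WithTop ℝ) ≤ ((i : ℝ) : WithTop ℝ)}) :=
      ((hτ.1.measurableSet A).mp hA).2 i
    have e2 : MeasurableSet[ℱ i] (Aᶜ ∩ {ω | ((τ ω : ℝ) : WithTop ℝ) ≤ ((i : ℝ) : WithTop ℝ)}) :=
      ((hτ.1.measurableSet Aᶜ).mp hAc).2 i
    have e3 : MeasurableSet[ℱ i] {ω | ((ρ ω : ℝ) : WithTop ℝ) ≤ ((i : ℝ) : WithTop ℝ)} := hρ.1 i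
    have e4 : MeasurableSet[ℱ i] {ω | ((ρ' ω : ℝ) : WithTop ℝ) ≤ ((i : ℝ) : WithTop ℝ)} := hρ'.1 i
    rw [hco] at e1 e2 e3 e4
    exact (((e1).inter e3).union ((e2).inter e4))
  have hstop : IsStopIn ℱ T τ ρ'' := by
    refine ⟨hst, fun ω => ?_, fun ω => ?_⟩
    · by_cases h : ω ∈ A
      · rw [hρ''_def]; simp only [if_pos h]; exact hρ.2.1 ω
      · rw [hρ''_def]; simp only [if_neg h]; exact hρ'.2.1 ω
    · by_cases h : ω ∈ A
      · rw [hρ''_def]; simp only [if_pos h]; exact hρ.2.2 ω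
      · rw [hρ''_def]; simp only [if_neg h]; exact hρ'.2.2 ω
  have hρ''0 : Stop0 ℱ T ρ'' := stopIn_stop0 hτ hstop
  obtain ⟨hXd'', hXn'', -⟩ := hX.1 ρ'' σ hρ''0 hσ
  set f'' : Ω → ℝ := 𝔈.cond τ (X ρ'' σ) with hf''
  -- a.e. equality on A with X ρ σ
  have hcons := hX.2 ρ'' σ ρ σ hρ''0 hσ hρ0 hσ
  have hcons' := hX.2 ρ'' σ ρ' σ hρ''0 hσ hρ'0 hσ
  have hindA : A.indicator (X ρ'' σ) =ᵐ[μ] A.indicator (X ρ σ) := by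
    filter_upwards [hcons] with ω hω
    by_cases h : ω ∈ A
    · rw [Set.indicator_of_mem h, Set.indicator_of_mem h]
      exact hω (by rw [hρ''_def]; exact if_pos h) rfl
    · rw [Set.indicator_of_notMem h, Set.indicator_of_notMem h]
  have hindAc : Aᶜ.indicator (X ρ'' σ) =ᵐ[μ] Aᶜ.indicator (X ρ' σ) := by
    filter_upwards [hcons'] with ω hω
    by_cases h : ω ∈ Aᶜ
    · rw [Set.indicator_of_mem h, Set.indicator_of_mem h]
      exact hω (by rw [hρ''_def]; exact if_neg (Set.notMem_of_mem_compl h)) rfl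
    · rw [Set.indicator_of_notMem h, Set.indicator_of_notMem h]
  -- E_τ of indicators
  have hz1 := 𝔈.zero_one hτ hXd'' hXn'' hA
  have hz2 := 𝔈.zero_one hτ hXd hXn hA
  have hz1' := 𝔈.zero_one hτ hXd'' hXn'' hAc
  have hz2' := 𝔈.zero_one hτ hXd' hXn' hAc
  have hcongrA := 𝔈.cond_congr' hτ (𝔈.indicator_mem hXd'' hAm) (indicator_nonneg_ae hXn'' A)
      (𝔈.indicator_mem hXd hAm) (indicator_nonneg_ae hXn A) hindA
  have hcongrAc := 𝔈.cond_congr' hτ (𝔈.indicator_mem hXd'' hAcm) (indicator_nonneg_ae hXn'' Aᶜ)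
      (𝔈.indicator_mem hXd' hAcm) (indicator_nonneg_ae hXn' Aᶜ) hindAc
  have hOnA : ∀ᵐ ω ∂μ, ω ∈ A → f'' ω = f ω := by
    have : A.indicator f'' =ᵐ[μ] A.indicator f :=
      (hz1.symm.trans hcongrA).trans hz2
    filter_upwards [this] with ω hω hmem
    rwa [Set.indicator_of_mem hmem, Set.indicator_of_mem hmem] at hω
  have hOnAc : ∀ᵐ ω ∂μ, ω ∉ A → f'' ω = f' ω := by
    have : Aᶜ.indicator f'' =ᵐ[μ] Aᶜ.indicator f' :=
      (hz1'.symm.trans hcongrAc).trans hz2'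
    filter_upwards [this] with ω hω hmem
    have hmem' : ω ∈ Aᶜ := hmem
    rwa [Set.indicator_of_mem hmem', Set.indicator_of_mem hmem'] at hω
  refine ⟨ρ'', hstop, ?_, ?_⟩
  · filter_upwards [hOnA, hOnAc] with ω h1 h2
    by_cases h : ω ∈ A
    · exact (h1 h).ge
    · exact ((lt_of_not_ge h).le).trans (h2 h).ge
  · filter_upwards [hOnA, hOnAc] with ω h1 h2
    by_cases h : ω ∈ A
    · exact (show f' ω ≤ f ω from h).trans (h1 h).ge
    · exact (h2 h).ge

private lemma integrable_arctan_comp {g : Ω → ℝ} (hg : Measurable g) :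
    Integrable (fun ω => Real.arctan (g ω)) μ := by
  refine Integrable.mono' (integrable_const (Real.pi / 2))
    ((Real.measurable_arctan.comp hg).aestronglyMeasurable) (ae_of_all _ fun ω => ?_)
  rw [Real.norm_eq_abs, abs_le]
  constructor
  · linarith [Real.neg_pi_div_two_lt_arctan (g ω)]
  · exact (Real.arctan_lt_pi_div_two (g ω)).le

private lemma attain (hT : 0 < T) (𝔈 : FExp μ T ℱ)
    (X : (Ω → ℝ) → (Ω → ℝ) → Ω → ℝ) (hX : Biadmissible 𝔈 X)
    (hbdd : BddReward2E0 𝔈 X)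
    {τ σ : Ω → ℝ} (hτ : Stop0 ℱ T τ) (hσ : Stop0 ℱ T σ)
    (u : Ω → ℝ)
    (hu : IsEssSupFam μ {g | ∃ ρ : Ω → ℝ, IsStopIn ℱ T τ ρ ∧ g = 𝔈.cond τ (X ρ σ)} u) :
    ∃ ρs : ℕ → Ω → ℝ, (∀ n, IsStopIn ℱ T τ (ρs n)) ∧
      (∀ᵐ ω ∂μ, (∀ n, 𝔈.cond τ (X (ρs n) σ) ω ≤ 𝔈.cond τ (X (ρs (n + 1)) σ) ω) ∧
        Tendsto (fun n => 𝔈.cond τ (X (ρs n) σ) ω) atTop (nhds (u ω))) ∧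
      u ∈ 𝔈.Dom ∧ 0 ≤ᵐ[μ] u := by
  classical
  obtain ⟨C₀, hC₀⟩ := hbdd
  -- basic facts about family members
  have hXfact : ∀ ρ : Ω → ℝ, IsStopIn ℱ T τ ρ →
      X ρ σ ∈ 𝔈.Dom ∧ 0 ≤ᵐ[μ] X ρ σ := fun ρ hρ =>
    ⟨(hX.1 ρ σ (stopIn_stop0 hτ hρ) hσ).1, (hX.1 ρ σ (stopIn_stop0 hτ hρ) hσ).2.1⟩
  have hcd : ∀ ρ : Ω → ℝ, IsStopIn ℱ T τ ρ → 𝔈.cond τ (X ρ σ) ∈ 𝔈.Dom := fun ρ hρ =>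
    𝔈.cond_mem hτ (hXfact ρ hρ).1 (hXfact ρ hρ).2
  have hcn : ∀ ρ : Ω → ℝ, IsStopIn ℱ T τ ρ → 0 ≤ᵐ[μ] 𝔈.cond τ (X ρ σ) := fun ρ hρ =>
    𝔈.cond_nonneg hτ (hXfact ρ hρ).1 (hXfact ρ hρ).2
  have hcm : ∀ ρ : Ω → ℝ, IsStopIn ℱ T τ ρ → Measurable (𝔈.cond τ (X ρ σ)) := fun ρ hρ =>
    (𝔈.cond_adapted hτ (hXfact ρ hρ).1 (hXfact ρ hρ).2).mono hτ.1.measurableSpace_le le_rfl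
  have hub : ∀ ρ : Ω → ℝ, IsStopIn ℱ T τ ρ → 𝔈.cond τ (X ρ σ) ≤ᵐ[μ] u := fun ρ hρ =>
    hu.1 _ ⟨ρ, hρ, rfl⟩
  -- the sup of arctan integrals
  set I : (Ω → ℝ) → ℝ := fun g => ∫ ω, Real.arctan (g ω) ∂μ with hI
  set S : Set ℝ := (fun ρ : {ρ : Ω → ℝ // IsStopIn ℱ T τ ρ} => I (𝔈.cond τ (X ρ.1 σ))) ''
    Set.univ with hS
  have hτself : IsStopIn ℱ T τ τ := ⟨hτ.1, fun ω => le_rfl, hτ.2.2⟩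
  have hSne : S.Nonempty := ⟨_, ⟨⟨τ, hτself⟩, Set.mem_univ _, rfl⟩⟩
  have hSbdd : BddAbove S := by
    refine ⟨Real.pi / 2, ?_⟩
    rintro x ⟨⟨ρ, hρ⟩, -, rfl⟩
    have : I (𝔈.cond τ (X ρ σ)) ≤ ∫ _ω, Real.pi / 2 ∂μ := by
      refine integral_mono_ae (integrable_arctan_comp (hcm ρ hρ)) (integrable_const _)
        (ae_of_all _ fun ω => (Real.arctan_lt_pi_div_two _).le)
    simpa using this
  set c : ℝ := sSup S with hc
  have hle_c : ∀ ρ : Ω → ℝ, IsStopIn ℱ T τ ρ → I (𝔈.cond τ (X ρ σ)) ≤ c := fun ρ hρ =>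
    le_csSup hSbdd ⟨⟨ρ, hρ⟩, Set.mem_univ _, rfl⟩
  -- maximizing choices
  have Hn : ∀ n : ℕ, ∃ ρ : Ω → ℝ, IsStopIn ℱ T τ ρ ∧
      c - 1 / (n + 1 : ℝ) < I (𝔈.cond τ (X ρ σ)) := by
    intro n
    have hlt : c - 1 / (n + 1 : ℝ) < c := sub_lt_self _ (by positivity)
    obtain ⟨x, hxS, hx⟩ := exists_lt_of_lt_csSup hSne hlt
    obtain ⟨⟨ρ, hρ⟩, -, rfl⟩ := hxS
    exact ⟨ρ, hρ, hx⟩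
  choose g hg hgI using Hn
  -- recursive combination
  have D' : ∀ (a : {ρ : Ω → ℝ // IsStopIn ℱ T τ ρ}) (n : ℕ),
      ∃ b : {ρ : Ω → ℝ // IsStopIn ℱ T τ ρ},
        𝔈.cond τ (X a.1 σ) ≤ᵐ[μ] 𝔈.cond τ (X b.1 σ) ∧
        𝔈.cond τ (X (g n) σ) ≤ᵐ[μ] 𝔈.cond τ (X b.1 σ) := by
    intro a n
    obtain ⟨r, hr, h1, h2⟩ := directed_fam 𝔈 X hX hτ hσ a.2 (hg n)
    exact ⟨⟨r, hr⟩, h1, h2⟩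
  choose F hF1 hF2 using D'
  let seq : ℕ → {ρ : Ω → ℝ // IsStopIn ℱ T τ ρ} := fun n =>
    Nat.rec ⟨g 0, hg 0⟩ (fun k prev => F prev (k + 1)) n
  set hs : ℕ → Ω → ℝ := fun n => 𝔈.cond τ (X (seq n).1 σ) with hhs
  have hseq_succ : ∀ n, seq (n + 1) = F (seq n) (n + 1) := fun n => rfl
  have hmono : ∀ n, hs n ≤ᵐ[μ] hs (n + 1) := by
    intro n
    rw [hhs]
    simp only
    rw [hseq_succ n]
    exact hF1 (seq n) (n + 1)
  have hgs : ∀ n, 𝔈.cond τ (X (g n) σ) ≤ᵐ[μ] hs n := by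
    intro n
    cases n with
    | zero => exact Filter.EventuallyLE.refl _ _
    | succ k =>
      rw [hhs]
      simp only
      rw [hseq_succ k]
      exact hF2 (seq k) (k + 1)
  have hsI_lb : ∀ n : ℕ, c - 1 / (n + 1 : ℝ) < I (hs n) := by
    intro n
    refine lt_of_lt_of_le (hgI n) ?_
    refine integral_mono_ae (integrable_arctan_comp (hcm _ (hg n)))
      (integrable_arctan_comp (hcm _ (seq n).2)) ?_
    filter_upwards [hgs n] with ω hω
    exact Real.arctan_strictMono.monotone hω
  have hsI_ub : ∀ n, I (hs n) ≤ c := fun n => hle_c _ (seq n).2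
  -- a.e. monotone, bounded, convergent
  have hmono_ae : ∀ᵐ ω ∂μ, ∀ n, hs n ω ≤ hs (n + 1) ω := ae_all_iff.2 hmono
  have hub_ae : ∀ᵐ ω ∂μ, ∀ n, hs n ω ≤ u ω := ae_all_iff.2 fun n => hub _ (seq n).2
  have hnn_ae : ∀ᵐ ω ∂μ, ∀ n, 0 ≤ hs n ω := ae_all_iff.2 fun n => hcn _ (seq n).2
  set L : Ω → ℝ := fun ω => ⨆ n, hs n ω with hL
  have htendL : ∀ᵐ ω ∂μ, Tendsto (fun n => hs n ω) atTop (nhds (L ω)) := by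
    filter_upwards [hmono_ae, hub_ae] with ω h1 h2
    have hm : Monotone fun n => hs n ω := monotone_nat_of_le_succ h1
    have hbd : BddAbove (Set.range fun n => hs n ω) := ⟨u ω, by rintro x ⟨n, rfl⟩; exact h2 n⟩
    exact tendsto_atTop_ciSup hm hbd
  have hLae : AEMeasurable L μ :=
    aemeasurable_of_tendsto_metrizable_ae atTop (fun n => (hcm _ (seq n).2).aemeasurable) htendL
  set G : Ω → ℝ := AEMeasurable.mk L hLae with hG
  have hGmeas : Measurable G := hLae.measurable_mk
  have hGL : L =ᵐ[μ] G := hLae.ae_eq_mk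
  have htendG : ∀ᵐ ω ∂μ, Tendsto (fun n => hs n ω) atTop (nhds (G ω)) := by
    filter_upwards [htendL, hGL] with ω h1 h2
    rwa [h2] at h1
  -- ∫ arctan G = c
  have harc_bound : ∀ (f : ℕ → Ω → ℝ) (n : ℕ),
      ∀ᵐ ω ∂μ, ‖Real.arctan (f n ω)‖ ≤ Real.pi / 2 := by
    intro f n
    refine ae_of_all _ fun ω => ?_
    rw [Real.norm_eq_abs, abs_le]
    exact ⟨by linarith [Real.neg_pi_div_two_lt_arctan (f n ω)],
      (Real.arctan_lt_pi_div_two _).le⟩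
  have htend_int : Tendsto (fun n => I (hs n)) atTop (nhds (I G)) := by
    refine tendsto_integral_of_dominated_convergence (fun _ => Real.pi / 2)
      (fun n => (Real.measurable_arctan.comp (hcm _ (seq n).2)).aestronglyMeasurable)
      (integrable_const _) (harc_bound _) ?_
    filter_upwards [htendG] with ω hω
    exact (Real.continuous_arctan.tendsto _).comp hω
  have hIG : I G = c := by
    have h1 : Tendsto (fun n => I (hs n)) atTop (nhds c) := by
      have hlb : Tendsto (fun n : ℕ => c - 1 / (n + 1 : ℝ)) atTop (nhds c) := by
        have : Tendsto (fun n : ℕ => 1 / (n + 1 : ℝ)) atTop (nhds 0) :=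
          tendsto_one_div_add_atTop_nhds_zero_nat
        have := (tendsto_const_nhds (x := c) (f := atTop (α := ℕ))).sub this
        simpa using this
      exact tendsto_of_tendsto_of_tendsto_of_le_of_le hlb tendsto_const_nhds
        (fun n => (hsI_lb n).le) hsI_ub
    exact tendsto_nhds_unique htend_int h1
  -- G is an essential upper bound of the family
  have hGub : ∀ f ∈ {g | ∃ ρ : Ω → ℝ, IsStopIn ℱ T τ ρ ∧ g = 𝔈.cond τ (X ρ σ)},
      f ≤ᵐ[μ] G := by
    rintro f ⟨ρ, hρ, rfl⟩
    set f := 𝔈.cond τ (X ρ σ)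
    have hmax_int : ∀ n, I (fun ω => max (hs n ω) (f ω)) ≤ c := by
      intro n
      obtain ⟨r, hr, h1, h2⟩ := directed_fam 𝔈 X hX hτ hσ (seq n).2 hρ
      have hle : (fun ω => Real.arctan (max (hs n ω) (f ω))) ≤ᵐ[μ]
          fun ω => Real.arctan (𝔈.cond τ (X r σ) ω) := by
        filter_upwards [h1, h2] with ω e1 e2
        exact Real.arctan_strictMono.monotone (max_le e1 e2)
      calc I (fun ω => max (hs n ω) (f ω))
          ≤ I (𝔈.cond τ (X r σ)) := by
            refine integral_mono_ae ?_ (integrable_arctan_comp (hcm r hr)) hle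
            exact integrable_arctan_comp ((hcm _ (seq n).2).max (hcm ρ hρ))
        _ ≤ c := hle_c r hr
    have htmax : Tendsto (fun n => I (fun ω => max (hs n ω) (f ω))) atTop
        (nhds (I (fun ω => max (G ω) (f ω)))) := by
      refine tendsto_integral_of_dominated_convergence (fun _ => Real.pi / 2)
        (fun n => (Real.measurable_arctan.comp
          ((hcm _ (seq n).2).max (hcm ρ hρ))).aestronglyMeasurable)
        (integrable_const _) (harc_bound _) ?_
      filter_upwards [htendG] with ω hω
      exact (Real.continuous_arctan.tendsto _).comp (hω.max tendsto_const_nhds)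
    have hImax_le : I (fun ω => max (G ω) (f ω)) ≤ c := le_of_tendsto htmax
      (Filter.Eventually.of_forall hmax_int)
    have hImax_ge : I G ≤ I (fun ω => max (G ω) (f ω)) := by
      refine integral_mono_ae (integrable_arctan_comp hGmeas)
        (integrable_arctan_comp (hGmeas.max (hcm ρ hρ)))
        (ae_of_all _ fun ω => Real.arctan_strictMono.monotone (le_max_left _ _))
    have hIeq : I G = I (fun ω => max (G ω) (f ω)) :=
      le_antisymm hImax_ge (by rw [hIG]; exact hImax_le)
    have haeeq : (fun ω => Real.arctan (G ω)) =ᵐ[μ]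
        fun ω => Real.arctan (max (G ω) (f ω)) := by
      rw [← integral_eq_iff_of_ae_le (integrable_arctan_comp hGmeas)
        (integrable_arctan_comp (hGmeas.max (hcm ρ hρ)))
        (ae_of_all _ fun ω => Real.arctan_strictMono.monotone (le_max_left _ _))]
      exact hIeq
    filter_upwards [haeeq] with ω hω
    have hmax : G ω = max (G ω) (f ω) := Real.arctan_injective hω
    exact (le_max_right (G ω) (f ω)).trans hmax.ge
  -- identify u with G a.e.
  have hUleG : u ≤ᵐ[μ] G := hu.2 G hGub
  have hGleU : G ≤ᵐ[μ] u := by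
    filter_upwards [htendG, hub_ae] with ω h1 h2
    exact le_of_tendsto h1 (Filter.Eventually.of_forall h2)
  have hueq : u =ᵐ[μ] G := hUleG.antisymm hGleU
  have htendu : ∀ᵐ ω ∂μ, Tendsto (fun n => hs n ω) atTop (nhds (u ω)) := by
    filter_upwards [htendG, hueq] with ω h1 h2
    rwa [← h2] at h1
  have hnn_u : 0 ≤ᵐ[μ] u := by
    filter_upwards [htendu, hnn_ae] with ω h1 h2
    exact ge_of_tendsto h1 (Filter.Eventually.of_forall h2)
  have hudom : u ∈ 𝔈.Dom := by
    refine 𝔈.h5 (ξ := hs) (fun n => hcd _ (seq n).2) (fun n => hcn _ (seq n).2) htendu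
      ⟨C₀, Filter.Frequently.of_forall fun n => ?_⟩
    have : 𝔈.E0 (hs n) = 𝔈.E0 (X (seq n).1 σ) :=
      𝔈.E0_cond' hT hτ (hXfact _ (seq n).2).1 (hXfact _ (seq n).2).2
    rw [this]
    exact hC₀ _ σ (stopIn_stop0 hτ (seq n).2) hσ
  refine ⟨fun n => (seq n).1, fun n => (seq n).2, ?_, hudom, hnn_u⟩
  filter_upwards [hmono_ae, htendu] with ω h1 h2
  exact ⟨h1, h2⟩

private lemma key_ineq (hT : 0 < T) (𝔈 𝔉 : FExp μ T ℱ) (hdom : Dominated 𝔈 𝔉)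
    (X : (Ω → ℝ) → (Ω → ℝ) → Ω → ℝ) (hX : Biadmissible 𝔈 X)
    (hbdd : BddReward2E0 𝔈 X)
    {τ σa σb : Ω → ℝ} (hτ : Stop0 ℱ T τ) (hσa : Stop0 ℱ T σa) (hσb : Stop0 ℱ T σb)
    (ua ub : Ω → ℝ)
    (hua : IsEssSupFam μ {g | ∃ ρ : Ω → ℝ, IsStopIn ℱ T τ ρ ∧ g = 𝔈.cond τ (X ρ σa)} ua)
    (hub : IsEssSupFam μ {g | ∃ ρ : Ω → ℝ, IsStopIn ℱ T τ ρ ∧ g = 𝔈.cond τ (X ρ σb)} ub)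
    (C : ℝ)
    (hC : ∀ S : Ω → ℝ, Stop0 ℱ T S → 𝔉.E0 (fun ω => |X S σa ω - X S σb ω|) ≤ C) :
    𝔈.E0 ua ≤ 𝔈.E0 ub + C := by
  classical
  obtain ⟨ρs, hρs, haea, huaDom, hua0⟩ := attain hT 𝔈 X hX hbdd hτ hσa ua hua
  obtain ⟨-, -, -, hubDom, hub0⟩ := attain hT 𝔈 X hX hbdd hτ hσb ub hub
  set hs : ℕ → Ω → ℝ := fun n => 𝔈.cond τ (X (ρs n) σa) with hhs
  have hXa : ∀ n : ℕ, X (ρs n) σa ∈ 𝔈.Dom ∧ 0 ≤ᵐ[μ] X (ρs n) σa := fun n =>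
    ⟨(hX.1 _ _ (stopIn_stop0 hτ (hρs n)) hσa).1,
      (hX.1 _ _ (stopIn_stop0 hτ (hρs n)) hσa).2.1⟩
  have hXb : ∀ n : ℕ, X (ρs n) σb ∈ 𝔈.Dom ∧ 0 ≤ᵐ[μ] X (ρs n) σb := fun n =>
    ⟨(hX.1 _ _ (stopIn_stop0 hτ (hρs n)) hσb).1,
      (hX.1 _ _ (stopIn_stop0 hτ (hρs n)) hσb).2.1⟩
  have hsmeas : ∀ n, Measurable (hs n) := fun n =>
    (𝔈.cond_adapted hτ (hXa n).1 (hXa n).2).mono hτ.1.measurableSpace_le le_rfl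
  have hsdom : ∀ n, hs n ∈ 𝔈.Dom := fun n => 𝔈.cond_mem hτ (hXa n).1 (hXa n).2
  have hsnn : ∀ n, 0 ≤ᵐ[μ] hs n := fun n => 𝔈.cond_nonneg hτ (hXa n).1 (hXa n).2
  -- Step 1: each `E0 (hs n)` is bounded by `E0 ub + C`
  have hstep : ∀ n : ℕ, 𝔈.E0 (hs n) ≤ 𝔈.E0 ub + C := by
    intro n
    have hρ0 := stopIn_stop0 hτ (hρs n)
    obtain ⟨hda, hna⟩ := hXa n
    obtain ⟨hdb, hnb⟩ := hXb n
    set ξd : Ω → ℝ := fun ω => |X (ρs n) σa ω - X (ρs n) σb ω| with hξd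
    have hξdval : ∀ ω, ξd ω = |X (ρs n) σa ω - X (ρs n) σb ω| := fun ω => rfl
    have hsum : X (ρs n) σa + X (ρs n) σb ∈ 𝔈.Dom := 𝔈.add_mem hda hdb
    have hξdmemE : ξd ∈ 𝔈.Dom := by
      refine 𝔈.sandwich_mem hsum ?_
      filter_upwards [hna, hnb] with ω h1 h2
      have h1' : (0 : ℝ) ≤ X (ρs n) σa ω := h1
      have h2' : (0 : ℝ) ≤ X (ρs n) σb ω := h2
      refine ⟨abs_nonneg _, ?_⟩
      have hb : |X (ρs n) σa ω - X (ρs n) σb ω| ≤ X (ρs n) σa ω + X (ρs n) σb ω :=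
        abs_le.2 ⟨by linarith, by linarith⟩
      exact hb
    have hξd0 : 0 ≤ᵐ[μ] ξd := ae_of_all _ fun ω => abs_nonneg _
    have hsum2 : ξd + X (ρs n) σb ∈ 𝔈.Dom := 𝔈.add_mem hξdmemE hdb
    have hsum20 : 0 ≤ᵐ[μ] ξd + X (ρs n) σb := by
      filter_upwards [hnb] with ω h2
      exact add_nonneg (abs_nonneg _) h2
    have hptwise : X (ρs n) σa ≤ᵐ[μ] ξd + X (ρs n) σb := by
      refine ae_of_all _ fun ω => ?_
      have h1 : X (ρs n) σa ω - X (ρs n) σb ω ≤ |X (ρs n) σa ω - X (ρs n) σb ω| :=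
        le_abs_self _
      have h2 : (ξd + X (ρs n) σb) ω = |X (ρs n) σa ω - X (ρs n) σb ω| + X (ρs n) σb ω := rfl
      rw [h2]
      linarith
    have h1 : 𝔈.E0 (X (ρs n) σa) ≤ 𝔈.E0 (ξd + X (ρs n) σb) :=
      𝔈.E0_mono' hT hda hna hsum2 hsum20 hptwise
    have h2 : 𝔈.E0 (ξd + X (ρs n) σb) ≤ 𝔈.E0 (X (ρs n) σb) + 𝔉.E0 ξd :=
      E0_dominated hT 𝔈 𝔉 hdom hξdmemE hξd0 hdb hnb
    have h3 : 𝔉.E0 ξd ≤ C := hC (ρs n) hρ0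
    have h4 : 𝔈.E0 (X (ρs n) σb) ≤ 𝔈.E0 ub := by
      have hcondle : 𝔈.cond τ (X (ρs n) σb) ≤ᵐ[μ] ub := hub.1 _ ⟨ρs n, hρs n, rfl⟩
      have hmle := 𝔈.E0_mono' hT (𝔈.cond_mem hτ hdb hnb) (𝔈.cond_nonneg hτ hdb hnb)
        hubDom hub0 hcondle
      calc 𝔈.E0 (X (ρs n) σb) = 𝔈.E0 (𝔈.cond τ (X (ρs n) σb)) :=
            (𝔈.E0_cond' hT hτ hdb hnb).symm
        _ ≤ 𝔈.E0 ub := hmle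
    have h5 : 𝔈.E0 (hs n) = 𝔈.E0 (X (ρs n) σa) := 𝔈.E0_cond' hT hτ (hXa n).1 (hXa n).2
    linarith
  -- Step 2: measurable modifications
  have htendua : ∀ᵐ ω ∂μ, Tendsto (fun n => hs n ω) atTop (nhds (ua ω)) :=
    haea.mono fun ω h => h.2
  have huaAE : AEMeasurable ua μ :=
    aemeasurable_of_tendsto_metrizable_ae atTop (fun n => (hsmeas n).aemeasurable) htendua
  set uu : Ω → ℝ := AEMeasurable.mk ua huaAE with huudef
  have huumeas : Measurable uu := huaAE.measurable_mk
  have huueq : ua =ᵐ[μ] uu := huaAE.ae_eq_mk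
  have hgood : ∀ᵐ ω ∂μ, (∀ n, hs n ω ≤ hs (n + 1) ω) ∧
      Tendsto (fun n => hs n ω) atTop (nhds (uu ω)) ∧ (∀ n, 0 ≤ hs n ω) ∧ 0 ≤ uu ω := by
    filter_upwards [haea, huueq, ae_all_iff.2 hsnn, hua0] with ω h1 h2 h3 h4
    exact ⟨h1.1, h2 ▸ h1.2, h3, h2 ▸ h4⟩
  set Bad : Set Ω := {ω | ¬((∀ n, hs n ω ≤ hs (n + 1) ω) ∧
      Tendsto (fun n => hs n ω) atTop (nhds (uu ω)) ∧ (∀ n, 0 ≤ hs n ω) ∧ 0 ≤ uu ω)}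
    with hBaddef
  have hBad0 : μ Bad = 0 := by
    rw [ae_iff] at hgood
    exact hgood
  have ht0 : μ (toMeasurable μ Bad) = 0 := by rw [measure_toMeasurable]; exact hBad0
  have htm : MeasurableSet (toMeasurable μ Bad) := measurableSet_toMeasurable μ Bad
  set M : Set Ω := (toMeasurable μ Bad)ᶜ with hMdef
  have hMm : MeasurableSet M := htm.compl
  have hMgood : ∀ ω ∈ M, (∀ n, hs n ω ≤ hs (n + 1) ω) ∧
      Tendsto (fun n => hs n ω) atTop (nhds (uu ω)) ∧ (∀ n, 0 ≤ hs n ω) ∧ 0 ≤ uu ω := by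
    intro ω hω
    by_contra hcon
    exact hω (subset_toMeasurable μ Bad hcon)
  have hMae : ∀ᵐ ω ∂μ, ω ∈ M := measure_eq_zero_iff_ae_notMem.mp ht0
  set g : ℕ → Ω → ℝ := fun n => M.indicator (hs n) with hgdef
  set v : Ω → ℝ := M.indicator uu with hvdef
  have hgval : ∀ n ω, g n ω = M.indicator (hs n) ω := fun n ω => rfl
  have hvval : ∀ ω, v ω = M.indicator uu ω := fun ω => rfl
  have hgmono : ∀ ω, ∀ n, g n ω ≤ g (n + 1) ω := by
    intro ω n
    by_cases h : ω ∈ M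
    · rw [hgval, hgval, Set.indicator_of_mem h, Set.indicator_of_mem h]
      exact (hMgood ω h).1 n
    · rw [hgval, hgval, Set.indicator_of_notMem h, Set.indicator_of_notMem h]
  have hgnn : ∀ ω n, 0 ≤ g n ω := by
    intro ω n
    by_cases h : ω ∈ M
    · rw [hgval, Set.indicator_of_mem h]; exact (hMgood ω h).2.2.1 n
    · rw [hgval, Set.indicator_of_notMem h]
  have hvnn : ∀ ω, 0 ≤ v ω := by
    intro ω
    by_cases h : ω ∈ M
    · rw [hvval, Set.indicator_of_mem h]; exact (hMgood ω h).2.2.2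
    · rw [hvval, Set.indicator_of_notMem h]
  have hgtend : ∀ ω, Tendsto (fun n => g n ω) atTop (nhds (v ω)) := by
    intro ω
    by_cases h : ω ∈ M
    · have h1 : (fun n => g n ω) = fun n => hs n ω := by
        funext n; rw [hgval, Set.indicator_of_mem h]
      rw [h1, hvval, Set.indicator_of_mem h]
      exact (hMgood ω h).2.1
    · have h1 : (fun n => g n ω) = fun _ => (0 : ℝ) := by
        funext n; rw [hgval, Set.indicator_of_notMem h]
      rw [h1, hvval, Set.indicator_of_notMem h]
      exact tendsto_const_nhds
  have hgae : ∀ n, g n =ᵐ[μ] hs n := by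
    intro n
    filter_upwards [hMae] with ω hω
    rw [hgval, Set.indicator_of_mem hω]
  have hvae : v =ᵐ[μ] ua := by
    filter_upwards [hMae, huueq] with ω hω h2
    rw [hvval, Set.indicator_of_mem hω, ← h2]
  have hgdom : ∀ n, g n ∈ 𝔈.Dom := by
    intro n
    refine 𝔈.sandwich_mem (hsdom n) ?_
    filter_upwards [hgae n] with ω hω
    exact ⟨hgnn ω n, hω.le⟩
  have hvdom : v ∈ 𝔈.Dom := by
    refine 𝔈.sandwich_mem huaDom ?_
    filter_upwards [hvae] with ω hω
    exact ⟨hvnn ω, hω.le⟩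
  have hgmeas : ∀ n, Measurable (g n) := fun n => (hsmeas n).indicator hMm
  have hvmeas : Measurable v := huumeas.indicator hMm
  have hEg : ∀ n, 𝔈.E0 (g n) = 𝔈.E0 (hs n) := fun n =>
    𝔈.E0_congr' hT (hgdom n) (ae_of_all _ fun ω => hgnn ω n) (hsdom n) (hsnn n) (hgae n)
  have hEv : 𝔈.E0 ua = 𝔈.E0 v :=
    𝔈.E0_congr' hT huaDom hua0 hvdom (ae_of_all _ hvnn) hvae.symm
  -- Step 3: for every ε > 0
  have hfinal : ∀ ε : ℝ, 0 < ε → 𝔈.E0 ua ≤ 𝔈.E0 ub + C + ε := by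
    intro ε hε
    set δ : ℝ := ε / 2 with hδdef
    have hδ0 : 0 < δ := by positivity
    set A : ℕ → Set Ω := fun n => {ω | δ ≤ v ω - g n ω} with hAdef
    have hAm : ∀ n, MeasurableSet (A n) := fun n =>
      measurableSet_le measurable_const (hvmeas.sub (hgmeas n))
    have hAanti : Antitone A := by
      refine antitone_nat_of_succ_le fun n ω hω => ?_
      have h1 : δ ≤ v ω - g (n + 1) ω := hω
      have h2 : g n ω ≤ g (n + 1) ω := hgmono ω n
      show δ ≤ v ω - g n ω
      linarith
    have hAempty : ∀ᵐ ω ∂μ, ω ∉ ⋂ n, A n := by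
      refine ae_of_all _ fun ω hω => ?_
      have hlt : v ω - δ < v ω := by linarith
      obtain ⟨n, hn⟩ := ((hgtend ω).eventually (lt_mem_nhds hlt)).exists
      have hmem : ω ∈ A n := Set.mem_iInter.mp hω n
      have : δ ≤ v ω - g n ω := hmem
      linarith
    have hvdomF : v ∈ 𝔉.Dom := hdom.1 hvdom
    have hzero0 : (0 : Ω → ℝ) ≤ᵐ[μ] fun _ : Ω => (0 : ℝ) := ae_of_all _ fun _ => le_rfl
    have h2F := 𝔉.h2 (ξ := fun _ => (0 : ℝ)) (η := v) 𝔉.zero_mem hzero0 hvdomF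
      (ae_of_all _ hvnn) hAm hAanti hAempty
    have hzerofun : ∀ n, (fun _ : Ω => (0 : ℝ)) + (A n).indicator v = (A n).indicator v := by
      intro n; funext ω; simp
    have h2F' : Tendsto (fun n => 𝔉.E0 ((A n).indicator v)) atTop (nhds 0) := by
      rw [𝔉.E0_zero' hT] at h2F
      have heqfun : (fun n => 𝔉.E0 ((fun _ : Ω => (0 : ℝ)) + (A n).indicator v)) =
          fun n => 𝔉.E0 ((A n).indicator v) := by
        funext n; rw [hzerofun n]
      rwa [heqfun] at h2F
    obtain ⟨n, hn⟩ := (h2F'.eventually (gt_mem_nhds hδ0)).exists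
    -- pointwise bound
    set w : Ω → ℝ := g n + (A n).indicator v with hwdef
    have hwval : ∀ ω, w ω = g n ω + (A n).indicator v ω := fun ω => rfl
    have hwnn : ∀ ω, 0 ≤ w ω := fun ω => by
      rw [hwval]
      exact add_nonneg (hgnn ω n) (Set.indicator_apply_nonneg fun _ => hvnn ω)
    have hwdom : w ∈ 𝔈.Dom := 𝔈.add_mem (hgdom n) (𝔈.indicator_mem hvdom (hAm n))
    have hptw : v ≤ᵐ[μ] w + fun _ => δ := by
      refine ae_of_all _ fun ω => ?_
      show v ω ≤ g n ω + (A n).indicator v ω + δ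
      by_cases h : ω ∈ A n
      · rw [Set.indicator_of_mem h]
        have := hgnn ω n
        linarith
      · rw [Set.indicator_of_notMem h]
        have hlt : ¬(δ ≤ v ω - g n ω) := h
        push_neg at hlt
        linarith
    have hwd : w + (fun _ : Ω => δ) ∈ 𝔈.Dom := 𝔈.add_mem hwdom (𝔈.const_mem δ)
    have hwd0 : 0 ≤ᵐ[μ] w + fun _ : Ω => δ :=
      ae_of_all _ fun ω => add_nonneg (hwnn ω) hδ0.le
    have hm1 : 𝔈.E0 v ≤ 𝔈.E0 (w + fun _ => δ) :=
      𝔈.E0_mono' hT hvdom (ae_of_all _ hvnn) hwd hwd0 hptw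
    have hm2 : 𝔈.E0 (w + fun _ : Ω => δ) = 𝔈.E0 w + δ :=
      𝔈.E0_add_const' hT hwdom (ae_of_all _ hwnn) hδ0.le
    have hm3 : 𝔈.E0 w ≤ 𝔈.E0 (g n) + 𝔉.E0 ((A n).indicator v) := by
      have hcomm : w = (A n).indicator v + g n := by
        funext ω; rw [hwval]; exact add_comm _ _
      rw [hcomm]
      exact E0_dominated hT 𝔈 𝔉 hdom (𝔈.indicator_mem hvdom (hAm n))
        (ae_of_all _ fun ω => Set.indicator_apply_nonneg fun _ => hvnn ω)
        (hgdom n) (ae_of_all _ fun ω => hgnn ω n)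
    have hm4 : 𝔈.E0 (g n) ≤ 𝔈.E0 ub + C := by rw [hEg n]; exact hstep n
    have hm5 : 𝔉.E0 ((A n).indicator v) ≤ δ := hn.le
    have hδε : δ + δ = ε := by rw [hδdef]; ring
    rw [hEv]
    linarith
  by_contra hcon
  push_neg at hcon
  have hε : 0 < (𝔈.E0 ua - (𝔈.E0 ub + C)) / 2 := by linarith
  have := hfinal _ hε
  linarith

end AuxProof

/-- the key domination estimate for `U₁`. -/
theorem U1_estimate [IsProbabilityMeasure μ] (hT : 0 < T)
    (𝔈 𝔉 : FExp μ T ℱ) (hdom : Dominated 𝔈 𝔉)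
    (X : (Ω → ℝ) → (Ω → ℝ) → Ω → ℝ) (hX : Biadmissible 𝔈 X)
    (hbdd : BddReward2E0 𝔈 X)
    (U1 : (Ω → ℝ) → (Ω → ℝ) → Ω → ℝ)
    (hU1 : ∀ τ σ : Ω → ℝ, Stop0 ℱ T τ → Stop0 ℱ T σ →
      IsEssSupFam μ
        {g | ∃ τ₁ : Ω → ℝ, IsStopIn ℱ T τ τ₁ ∧ g = 𝔈.cond τ (X τ₁ σ)} (U1 τ σ))
    (τ σ₁ σ₂ : Ω → ℝ) (hτ : Stop0 ℱ T τ) (hσ₁ : Stop0 ℱ T σ₁) (hσ₂ : Stop0 ℱ T σ₂)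
    (C : ℝ)
    (hC : ∀ S : Ω → ℝ, Stop0 ℱ T S →
      𝔉.E0 (fun ω => |X S σ₁ ω - X S σ₂ ω|) ≤ C) :
    |𝔈.E0 (U1 τ σ₁) - 𝔈.E0 (U1 τ σ₂)| ≤ C := by
  have h1 : 𝔈.E0 (U1 τ σ₁) ≤ 𝔈.E0 (U1 τ σ₂) + C :=
    key_ineq hT 𝔈 𝔉 hdom X hX hbdd hτ hσ₁ hσ₂ _ _ (hU1 τ σ₁ hτ hσ₁) (hU1 τ σ₂ hτ hσ₂) C hC
  have hC' : ∀ S : Ω → ℝ, Stop0 ℱ T S →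
      𝔉.E0 (fun ω => |X S σ₂ ω - X S σ₁ ω|) ≤ C := by
    intro S hS
    have heq : (fun ω => |X S σ₂ ω - X S σ₁ ω|) = fun ω => |X S σ₁ ω - X S σ₂ ω| := by
      funext ω; exact abs_sub_comm _ _
    rw [heq]
    exact hC S hS
  have h2 : 𝔈.E0 (U1 τ σ₂) ≤ 𝔈.E0 (U1 τ σ₁) + C :=
    key_ineq hT 𝔈 𝔉 hdom X hX hbdd hτ hσ₂ hσ₁ _ _ (hU1 τ σ₂ hτ hσ₂) (hU1 τ σ₁ hτ hσ₁) C hC'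
  rw [abs_le]
  constructor <;> linarith

end OptMultStop
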